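/- Let U be a non-principal ultrafilter on ℕ with the topology U ∪ {∅} on ℕ. Then the resulting space E is hereditarily irresolvable: no non-empty subspace of E admits two disjoint dense subsets. -/
import Mathlib


/-- The ultrafilter space on `ℕ` is hereditarily irresolvable: no non-empty subspace has two
disjoint subsets each dense in that subspace. -/
theorem ultrafilter_space_hereditarily_irresolvable (U : Ultrafilter ℕ)
    (hU : ∀ s : Set ℕ, s.Finite → s ∉ U)
    (T : TopologicalSpace ℕ)
    (hT : ∀ s : Set ℕ, T.IsOpen s ↔ s ∈ U ∨ s = ∅) :
    ∀ Y : Set ℕ, Y.Nonempty →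
      ¬ ∃ A B : Set ℕ, A ⊆ Y ∧ B ⊆ Y ∧ Disjoint A B ∧
        Y ⊆ @closure ℕ T A ∧ Y ⊆ @closure ℕ T B := by
  letI := T
  intro Y hY h
  obtain ⟨A, B, hAY, hBY, hAB, hYA, hYB⟩ := h
  by_cases hA : A ∈ U
  · have hAopen : IsOpen A := (hT A).mpr (Or.inl hA)
    have hAne : A.Nonempty := Set.nonempty_iff_ne_empty.mpr
      (fun h0 => hU ∅ Set.finite_empty (h0 ▸ hA))
    obtain ⟨a, ha⟩ := hAne
    have hacl : a ∈ closure B := hYB (hAY ha)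
    obtain ⟨x, hxA, hxB⟩ := (mem_closure_iff.mp hacl) A hAopen ha
    exact (Set.disjoint_left.mp hAB hxA) hxB
  · by_cases hB : B ∈ U
    · have hBopen : IsOpen B := (hT B).mpr (Or.inl hB)
      have hBne : B.Nonempty := Set.nonempty_iff_ne_empty.mpr
        (fun h0 => hU ∅ Set.finite_empty (h0 ▸ hB))
      obtain ⟨b, hb⟩ := hBne
      have hbcl : b ∈ closure A := hYA (hBY hb)
      obtain ⟨x, hxB, hxA⟩ := (mem_closure_iff.mp hbcl) B hBopen hb
      exact (Set.disjoint_right.mp hAB hxB) hxA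
    · have hAc : Aᶜ ∈ U := Ultrafilter.compl_mem_iff_notMem.mpr hA
      have hBc : Bᶜ ∈ U := Ultrafilter.compl_mem_iff_notMem.mpr hB
      have hclA : closure A ⊆ A := by
        intro x hx
        by_contra hxA
        obtain ⟨y, hy1, hy2⟩ := mem_closure_iff.mp hx Aᶜ ((hT Aᶜ).mpr (Or.inl hAc)) hxA
        exact hy1 hy2
      have hclB : closure B ⊆ B := by
        intro x hx
        by_contra hxB
        obtain ⟨y, hy1, hy2⟩ := mem_closure_iff.mp hx Bᶜ ((hT Bᶜ).mpr (Or.inl hBc)) hxB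
        exact hy1 hy2
      obtain ⟨y, hy⟩ := hY
      exact Set.disjoint_left.mp hAB (hclA (hYA hy)) (hclB (hYB hy))
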